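/- Let R be a principal ideal domain and let A be an m × n matrix over R. Then there exist an invertible m × m matrix U and an invertible n × n matrix V over R such that the matrix B = U A V is in Smith normal form, i.e. B i j = 0 whenever i ≠ j, and B i i divides B (i+1) (i+1) for each i with both indices in range. -/

import Mathlib

open Function

lemma exists_perm_comp {α β : Type*} [Fintype α] [Fintype β] [DecidableEq β]
    (f g : α ↪ β) : ∃ σ : Equiv.Perm β, ∀ a, σ (f a) = g a := by
  classical
  have hcard : Fintype.card ((Set.range ⇑f)ᶜ : Set β) = Fintype.card ((Set.range ⇑g)ᶜ : Set β) := by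
    rw [Fintype.card_compl_set, Fintype.card_compl_set,
      Set.card_range_of_injective f.injective, Set.card_range_of_injective g.injective]
  refine ⟨(Equiv.Set.sumCompl (Set.range ⇑f)).symm.trans
    (((f.toEquivRange.symm.trans g.toEquivRange).sumCongr
      (Fintype.equivOfCardEq hcard)).trans (Equiv.Set.sumCompl (Set.range ⇑g))), fun a => ?_⟩
  have hmem : f a ∈ Set.range ⇑f := ⟨a, rfl⟩
  have h1 : (Equiv.Set.sumCompl (Set.range ⇑f)).symm (f a) = Sum.inl ⟨f a, hmem⟩ :=
    Equiv.Set.sumCompl_symm_apply_of_mem hmem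
  have h2 : f.toEquivRange.symm ⟨f a, hmem⟩ = a := by
    simp [← Function.Embedding.toEquivRange_apply]
  simp [h1, h2, Function.Embedding.toEquivRange_apply]

open Matrix LinearMap in
lemma exists_diagonal {R : Type} [CommRing R] [IsDomain R] [IsPrincipalIdealRing R]
    {m n : ℕ} (A : Matrix (Fin m) (Fin n) R) :
    ∃ (U : Matrix (Fin m) (Fin m) R) (V : Matrix (Fin n) (Fin n) R),
      IsUnit U.det ∧ IsUnit V.det ∧
      (∀ (i : Fin m) (j : Fin n), (i : ℕ) ≠ (j : ℕ) → (U * A * V) i j = 0) := by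
  classical
  set bfn := Pi.basisFun R (Fin n)
  set bfm := Pi.basisFun R (Fin m)
  set φ := Matrix.toLin bfn bfm A with hφ
  obtain ⟨r, snf⟩ := (LinearMap.range φ).smithNormalForm bfm
  haveI : Module.Projective R (LinearMap.range φ) := .of_basis snf.bN
  obtain ⟨s, hs⟩ := Module.projective_lifting_property φ.rangeRestrict LinearMap.id
    φ.surjective_rangeRestrict
  obtain ⟨k, bK⟩ := (LinearMap.ker φ).basisOfPid bfn
  have hsφ : ∀ c : LinearMap.range φ, φ.rangeRestrict (s c) = c := fun c =>
    congrArg (fun f => f c) hs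
  have hsφ' : ∀ c : LinearMap.range φ, φ (s c) = (c : Fin m → R) := fun c =>
    congrArg Subtype.val (hsφ c)
  have hker : ∀ x : Fin n → R, x - s (φ.rangeRestrict x) ∈ LinearMap.ker φ := by
    intro x
    rw [LinearMap.mem_ker, map_sub, hsφ' (φ.rangeRestrict x), LinearMap.rangeRestrict,
      LinearMap.codRestrict_apply, sub_self]
  let F : (Fin n → R) →ₗ[R] (LinearMap.range φ) × (LinearMap.ker φ) :=
    LinearMap.prod φ.rangeRestrict
      ((LinearMap.id - s.comp φ.rangeRestrict).codRestrict (LinearMap.ker φ) hker)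
  let G : (LinearMap.range φ) × (LinearMap.ker φ) →ₗ[R] (Fin n → R) :=
    s.comp (LinearMap.fst R _ _) + (LinearMap.ker φ).subtype.comp (LinearMap.snd R _ _)
  have hGapp : ∀ p, G p = s p.1 + (p.2 : Fin n → R) := fun p => rfl
  have hFG : F.comp G = LinearMap.id := by
    apply LinearMap.ext
    rintro ⟨c, x⟩
    have hx0 : φ (x : Fin n → R) = 0 := x.2
    have hrr : φ.rangeRestrict ((s c : Fin n → R) + x) = c := by
      apply Subtype.ext
      show φ (s c + x) = (c : Fin m → R)
      rw [map_add, hsφ' c, hx0, add_zero]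
    refine Prod.ext ?_ ?_
    · show φ.rangeRestrict (G (c, x)) = c
      rw [hGapp]; exact hrr
    · apply Subtype.ext
      show (G (c, x)) - s (φ.rangeRestrict (G (c, x))) = (x : Fin n → R)
      rw [hGapp, hrr]
      abel
  have hGF : G.comp F = LinearMap.id := by
    apply LinearMap.ext
    intro x
    show s (φ.rangeRestrict x) + (x - s (φ.rangeRestrict x)) = x
    abel
  let e : (Fin n → R) ≃ₗ[R] (LinearMap.range φ) × (LinearMap.ker φ) :=
    LinearEquiv.ofLinear F G hFG hGF
  let b : Module.Basis (Fin r ⊕ Fin k) R (Fin n → R) := (snf.bN.prod bK).map e.symm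
  have hrk : r + k = n := by
    have := Fintype.card_congr (b.indexEquiv bfn)
    simpa using this
  let ee : (Fin r ⊕ Fin k) ≃ Fin n := finSumFinEquiv.trans (finCongr hrk)
  let bV : Module.Basis (Fin n) R (Fin n → R) := b.reindex ee
  have hrm : r ≤ m := by
    have := Fintype.card_le_of_embedding snf.f
    simpa using this
  obtain ⟨σ, hσ⟩ := exists_perm_comp snf.f (Fin.castLEEmb hrm)
  let bU : Module.Basis (Fin m) R (Fin m → R) := snf.bM.reindex σ
  refine ⟨bU.toMatrix bfm, bfn.toMatrix bV, ?_, ?_, ?_⟩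
  · haveI := bU.invertibleToMatrix bfm
    exact Matrix.isUnit_det_of_invertible _
  · haveI := bfn.invertibleToMatrix bV
    exact Matrix.isUnit_det_of_invertible _
  · intro i j hij
    have hUAV : bU.toMatrix bfm * A * bfn.toMatrix bV = LinearMap.toMatrix bV bU φ := by
      have h := basis_toMatrix_mul_linearMap_toMatrix_mul_basis_toMatrix bV bfn bU bfm φ
      rwa [hφ, LinearMap.toMatrix_toLin] at h
    rw [hUAV, LinearMap.toMatrix_apply]
    -- compute φ (bV j)
    have hbV : bV j = b (ee.symm j) := b.reindex_apply ee j
    rcases hee : ee.symm j with p | q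
    · -- range part
      have hb : b (Sum.inl p) = s (snf.bN p) := by
        show e.symm ((snf.bN.prod bK) (Sum.inl p)) = _
        have h1 : (snf.bN.prod bK) (Sum.inl p) = (snf.bN p, 0) := by
          apply Prod.ext
          · exact snf.bN.prod_apply_inl_fst bK p
          · exact snf.bN.prod_apply_inl_snd bK p
        rw [h1]
        show G (snf.bN p, 0) = _
        rw [hGapp]
        simp
      have hφb : φ (bV j) = snf.a p • snf.bM (snf.f p) := by
        rw [hbV, hee, hb, hsφ' (snf.bN p), snf.snf p]
      rw [hφb, _root_.map_smul]
      have hbM : snf.bM (snf.f p) = bU (Fin.castLE hrm p) := by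
        rw [show bU (Fin.castLE hrm p) = snf.bM (σ.symm (Fin.castLE hrm p)) from
          snf.bM.reindex_apply σ _]
        congr 1
        rw [show Fin.castLE hrm p = σ (snf.f p) from (hσ p).symm, Equiv.symm_apply_apply]
      rw [hbM, bU.repr_self]
      have hja : (j : ℕ) = (p : ℕ) := by
        have : j = ee (Sum.inl p) := by rw [← hee, Equiv.apply_symm_apply]
        rw [this]
        simp [ee]
      have : i ≠ Fin.castLE hrm p := by
        intro h
        apply hij
        rw [h, hja]
        rfl
      rw [Finsupp.smul_apply, Finsupp.single_eq_of_ne this]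
      simp
    · -- kernel part
      have hb : b (Sum.inr q) = (bK q : Fin n → R) := by
        show e.symm ((snf.bN.prod bK) (Sum.inr q)) = _
        have h1 : (snf.bN.prod bK) (Sum.inr q) = (0, bK q) := by
          apply Prod.ext
          · exact snf.bN.prod_apply_inr_fst bK q
          · exact snf.bN.prod_apply_inr_snd bK q
        rw [h1]
        show G (0, bK q) = _
        rw [hGapp]
        simp
      have hφb : φ (bV j) = 0 := by
        rw [hbV, hee, hb]
        exact (bK q).2
      rw [hφb]
      simp


namespace SNFAux

variable {R : Type} [CommRing R]

def emb {m : ℕ} (i j : Fin m) (a b c d : R) : Matrix (Fin m) (Fin m) R :=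
  Matrix.of fun p q =>
    if p = i then (if q = i then a else if q = j then b else 0)
    else if p = j then (if q = i then c else if q = j then d else 0)
    else if p = q then 1 else 0

lemma sum_two_support {m : ℕ} {i j : Fin m} (hij : i ≠ j) (f : Fin m → R) (a b : R) :
    (∑ r, (if r = i then a else if r = j then b else 0) * f r) = a * f i + b * f j := by
  have h : ∀ r, (if r = i then a else if r = j then b else 0) * f r
      = (if r = i then a * f i else 0) + (if r = j then b * f j else 0) := by
    intro r
    split_ifs <;> simp_all <;> ring
  rw [Finset.sum_congr rfl fun r _ => h r, Finset.sum_add_distrib]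
  simp

lemma sum_two_support' {m : ℕ} {i j : Fin m} (hij : i ≠ j) (f : Fin m → R) (a b : R) :
    (∑ r, f r * (if r = i then a else if r = j then b else 0)) = f i * a + f j * b := by
  have h : ∀ r, f r * (if r = i then a else if r = j then b else 0)
      = (if r = i then f i * a else 0) + (if r = j then f j * b else 0) := by
    intro r
    split_ifs <;> simp_all <;> ring
  rw [Finset.sum_congr rfl fun r _ => h r, Finset.sum_add_distrib]
  simp

lemma emb_mul_left {m n' : ℕ} {i j : Fin m} (hij : i ≠ j) (a b c d : R)
    (B : Matrix (Fin m) (Fin n') R) (p : Fin m) (q : Fin n') :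
    (emb i j a b c d * B) p q =
      if p = i then a * B i q + b * B j q
      else if p = j then c * B i q + d * B j q
      else B p q := by
  rw [Matrix.mul_apply]
  by_cases hp1 : p = i
  · rw [if_pos hp1]
    have h : ∀ r, emb i j a b c d p r = if r = i then a else if r = j then b else 0 := by
      intro r; simp only [emb, Matrix.of_apply, if_pos hp1]
    rw [Finset.sum_congr rfl fun r _ => by rw [h r]]
    exact sum_two_support hij _ a b
  · rw [if_neg hp1]
    by_cases hp2 : p = j
    · rw [if_pos hp2]
      have h : ∀ r, emb i j a b c d p r = if r = i then c else if r = j then d else 0 := by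
        intro r; simp only [emb, Matrix.of_apply, if_neg hp1, if_pos hp2]
      rw [Finset.sum_congr rfl fun r _ => by rw [h r]]
      exact sum_two_support hij _ c d
    · rw [if_neg hp2]
      have h : ∀ r, emb i j a b c d p r = if p = r then 1 else 0 := by
        intro r; simp only [emb, Matrix.of_apply, if_neg hp1, if_neg hp2]
      rw [Finset.sum_congr rfl fun r _ => by rw [h r]]
      simp [Finset.sum_ite_eq]

lemma mul_emb_right {m' n : ℕ} {i j : Fin n} (hij : i ≠ j) (a b c d : R)
    (B : Matrix (Fin m') (Fin n) R) (p : Fin m') (q : Fin n) :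
    (B * emb i j a b c d) p q =
      if q = i then B p i * a + B p j * c
      else if q = j then B p i * b + B p j * d
      else B p q := by
  rw [Matrix.mul_apply]
  by_cases hq1 : q = i
  · rw [if_pos hq1]
    have h : ∀ r, emb i j a b c d r q = if r = i then a else if r = j then c else 0 := by
      intro r; simp only [emb, Matrix.of_apply, if_pos hq1]
      split_ifs <;> simp_all
    rw [Finset.sum_congr rfl fun r _ => by rw [h r]]
    exact sum_two_support' hij _ a c
  · rw [if_neg hq1]
    by_cases hq2 : q = j
    · rw [if_pos hq2]
      have h : ∀ r, emb i j a b c d r q = if r = i then b else if r = j then d else 0 := by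
        intro r; simp only [emb, Matrix.of_apply, if_neg hq1, if_pos hq2]
        split_ifs <;> simp_all
      rw [Finset.sum_congr rfl fun r _ => by rw [h r]]
      exact sum_two_support' hij _ b d
    · rw [if_neg hq2]
      have h : ∀ r, emb i j a b c d r q = if r = q then 1 else 0 := by
        intro r; simp only [emb, Matrix.of_apply, if_neg hq1, if_neg hq2]
        split_ifs <;> simp_all
      rw [Finset.sum_congr rfl fun r _ => by rw [h r]]
      simp [Finset.sum_ite_eq']

lemma emb_id {m : ℕ} {i j : Fin m} (hij : i ≠ j) :
    emb i j (1 : R) 0 0 1 = 1 := by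
  ext p q
  simp only [emb, Matrix.of_apply, Matrix.one_apply]
  split_ifs <;> simp_all

lemma emb_mul_emb {m : ℕ} {i j : Fin m} (hij : i ≠ j) (a b c d a' b' c' d' : R) :
    emb i j a b c d * emb i j a' b' c' d' =
      emb i j (a*a'+b*c') (a*b'+b*d') (c*a'+d*c') (c*b'+d*d') := by
  ext p q
  rw [emb_mul_left hij]
  simp only [emb, Matrix.of_apply]
  split_ifs <;> simp_all <;> ring

lemma isUnit_emb_det {m : ℕ} {i j : Fin m} (hij : i ≠ j) {a b c d : R}
    (h : a * d - b * c = 1) : IsUnit (emb i j a b c d).det := by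
  apply Matrix.isUnit_det_of_right_inverse (B := emb i j d (-b) (-c) a)
  rw [emb_mul_emb hij]
  have e1 : a * d + b * (-c) = 1 := by linear_combination h
  have e2 : a * (-b) + b * a = 0 := by ring
  have e3 : c * d + d * (-c) = 0 := by ring
  have e4 : c * (-b) + d * a = 1 := by linear_combination h
  rw [e1, e2, e3, e4, emb_id hij]

lemma emb_mul_left_fst {m n' : ℕ} {i j : Fin m} (hij : i ≠ j) (a b c d : R)
    (B : Matrix (Fin m) (Fin n') R) (q : Fin n') :
    (emb i j a b c d * B) i q = a * B i q + b * B j q := by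
  rw [emb_mul_left hij, if_pos rfl]

lemma emb_mul_left_snd {m n' : ℕ} {i j : Fin m} (hij : i ≠ j) (a b c d : R)
    (B : Matrix (Fin m) (Fin n') R) (q : Fin n') :
    (emb i j a b c d * B) j q = c * B i q + d * B j q := by
  rw [emb_mul_left hij, if_neg (fun h => hij h.symm), if_pos rfl]

lemma emb_mul_left_other {m n' : ℕ} {i j : Fin m} (hij : i ≠ j) (a b c d : R)
    (B : Matrix (Fin m) (Fin n') R) {p : Fin m} (hpi : p ≠ i) (hpj : p ≠ j) (q : Fin n') :
    (emb i j a b c d * B) p q = B p q := by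
  rw [emb_mul_left hij, if_neg hpi, if_neg hpj]

lemma mul_emb_right_fst {m' n : ℕ} {i j : Fin n} (hij : i ≠ j) (a b c d : R)
    (B : Matrix (Fin m') (Fin n) R) (p : Fin m') :
    (B * emb i j a b c d) p i = B p i * a + B p j * c := by
  rw [mul_emb_right hij, if_pos rfl]

lemma mul_emb_right_snd {m' n : ℕ} {i j : Fin n} (hij : i ≠ j) (a b c d : R)
    (B : Matrix (Fin m') (Fin n) R) (p : Fin m') :
    (B * emb i j a b c d) p j = B p i * b + B p j * d := by
  rw [mul_emb_right hij, if_neg (fun h => hij h.symm), if_pos rfl]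

lemma mul_emb_right_other {m' n : ℕ} {i j : Fin n} (hij : i ≠ j) (a b c d : R)
    (B : Matrix (Fin m') (Fin n) R) (p : Fin m') {q : Fin n} (hqi : q ≠ i) (hqj : q ≠ j) :
    (B * emb i j a b c d) p q = B p q := by
  rw [mul_emb_right hij, if_neg hqi, if_neg hqj]

variable [IsDomain R] [IsPrincipalIdealRing R]

/-- One gcd/lcm pivot step on a pair of diagonal positions of a diagonal matrix. -/
lemma pivot {m n : ℕ} (B : Matrix (Fin m) (Fin n) R)
    (hB : ∀ (p : Fin m) (q : Fin n), (p : ℕ) ≠ (q : ℕ) → B p q = 0)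
    {i j : ℕ} (him : i < m) (hin : i < n) (hjm : j < m) (hjn : j < n) (hij : i ≠ j) :
    ∃ (U : Matrix (Fin m) (Fin m) R) (V : Matrix (Fin n) (Fin n) R),
      IsUnit U.det ∧ IsUnit V.det ∧
      (∀ (p : Fin m) (q : Fin n), (p : ℕ) ≠ (q : ℕ) → (U * B * V) p q = 0) ∧
      ((U * B * V) ⟨i, him⟩ ⟨i, hin⟩ ∣ B ⟨i, him⟩ ⟨i, hin⟩) ∧
      ((U * B * V) ⟨i, him⟩ ⟨i, hin⟩ ∣ B ⟨j, hjm⟩ ⟨j, hjn⟩) ∧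
      ((U * B * V) ⟨i, him⟩ ⟨i, hin⟩ ∣ (U * B * V) ⟨j, hjm⟩ ⟨j, hjn⟩) ∧
      (∀ c : R, c ∣ B ⟨i, him⟩ ⟨i, hin⟩ → c ∣ B ⟨j, hjm⟩ ⟨j, hjn⟩ →
        c ∣ (U * B * V) ⟨i, him⟩ ⟨i, hin⟩ ∧ c ∣ (U * B * V) ⟨j, hjm⟩ ⟨j, hjn⟩) ∧
      (∀ (p : Fin m) (q : Fin n), (p : ℕ) = (q : ℕ) → (p : ℕ) ≠ i → (p : ℕ) ≠ j →
        (U * B * V) p q = B p q) := by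
  classical
  set iF : Fin m := ⟨i, him⟩
  set jF : Fin m := ⟨j, hjm⟩
  set iN : Fin n := ⟨i, hin⟩
  set jN : Fin n := ⟨j, hjn⟩
  have hijF : iF ≠ jF := by simp [iF, jF, Fin.ext_iff, hij]
  have hijN : iN ≠ jN := by simp [iN, jN, Fin.ext_iff, hij]
  set x := B iF iN with hx
  set y := B jF jN with hy
  obtain ⟨g, hg⟩ := (IsPrincipalIdealRing.principal (Ideal.span {x, y})).principal
  have hgx : g ∣ x := by
    rw [← Ideal.mem_span_singleton]
    show x ∈ Submodule.span R {g}
    rw [← hg]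
    exact Ideal.subset_span (by simp)
  have hgy : g ∣ y := by
    rw [← Ideal.mem_span_singleton]
    show y ∈ Submodule.span R {g}
    rw [← hg]
    exact Ideal.subset_span (by simp)
  have hgmem : g ∈ Ideal.span ({x, y} : Set R) := by
    rw [hg]
    exact Submodule.subset_span rfl
  obtain ⟨u, v, huv⟩ := Ideal.mem_span_pair.mp hgmem
  by_cases hg0 : g = 0
  · have hx0 : x = 0 := by simpa [hg0] using hgx
    have hy0 : y = 0 := by simpa [hg0] using hgy
    refine ⟨1, 1, by simp, by simp, ?_, ?_, ?_, ?_, ?_, ?_⟩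
    · intro p q h
      rw [Matrix.one_mul, Matrix.mul_one]
      exact hB p q h
    · rw [Matrix.one_mul, Matrix.mul_one]
    · rw [Matrix.one_mul, Matrix.mul_one]
      show x ∣ y
      rw [hx0, hy0]
    · rw [Matrix.one_mul, Matrix.mul_one]
      show x ∣ y
      rw [hx0, hy0]
    · intro c h1 h2
      rw [Matrix.one_mul, Matrix.mul_one]
      exact ⟨h1, h2⟩
    · intro p q _ _ _
      rw [Matrix.one_mul, Matrix.mul_one]
  obtain ⟨a', ha'⟩ := hgx
  obtain ⟨b', hb'⟩ := hgy
  have hdet : u * a' + v * b' = 1 := by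
    apply mul_left_cancel₀ hg0
    rw [mul_one, mul_add, ← mul_assoc, ← mul_assoc, mul_comm g u, mul_comm g v,
      mul_assoc, mul_assoc, ← ha', ← hb']
    exact huv
  have hBji : B jF iN = 0 := hB _ _ (by simpa [jF, iN] using (Ne.symm hij))
  have hBij : B iF jN = 0 := hB _ _ (by simpa [iF, jN] using hij)
  refine ⟨emb iF jF u v (-b') a', emb iN jN 1 (-(v*b')) 1 (1 - v*b'),
    isUnit_emb_det hijF (by linear_combination hdet), isUnit_emb_det hijN (by ring),
    ?_, ?_, ?_, ?_, ?_, ?_⟩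
  all_goals
    have hmaster : ∀ (p : Fin m) (q : Fin n),
        (emb iF jF u v (-b') a' * B * emb iN jN 1 (-(v*b')) 1 (1 - v*b')) p q =
        if p = iF ∧ q = iN then g
        else if p = jF ∧ q = jN then a' * y
        else if (p : ℕ) = (q : ℕ) then B p q else 0 := by
      intro p q
      show ((emb iF jF u v (-b') a' * B) * emb iN jN 1 (-(v*b')) 1 (1 - v*b')) p q = _
      by_cases hq1 : q = iN
      · subst hq1
        rw [mul_emb_right_fst hijN]
        by_cases hp1 : p = iF
        · subst hp1
          rw [emb_mul_left_fst hijF u v (-b') a' B iN, emb_mul_left_fst hijF u v (-b') a' B jN,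
            hBji, hBij, if_pos (show iF = iF ∧ iN = iN from ⟨rfl, rfl⟩)]
          linear_combination huv
        · by_cases hp2 : p = jF
          · subst hp2
            rw [emb_mul_left_snd hijF u v (-b') a' B iN, emb_mul_left_snd hijF u v (-b') a' B jN,
              hBji, hBij, if_neg (show ¬(jF = iF ∧ iN = iN) from fun h => hijF h.1.symm),
              if_neg (show ¬(jF = jF ∧ iN = jN) from fun h => hijN h.2),
              if_neg (show ¬((jF : ℕ) = (iN : ℕ)) from fun h => hij h.symm)]
            linear_combination (-b') * ha' + a' * hb'
          · rw [emb_mul_left_other hijF u v (-b') a' B hp1 hp2 iN,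
              emb_mul_left_other hijF u v (-b') a' B hp1 hp2 jN,
              if_neg (show ¬(p = iF ∧ iN = iN) from fun h => hp1 h.1),
              if_neg (show ¬(p = jF ∧ iN = jN) from fun h => hp2 h.1),
              if_neg (show ¬((p : ℕ) = (iN : ℕ)) from fun h => hp1 (Fin.ext h)),
              hB p iN (fun h => hp1 (Fin.ext h)), hB p jN (fun h => hp2 (Fin.ext h))]
            ring
      · by_cases hq2 : q = jN
        · subst hq2
          rw [mul_emb_right_snd hijN]
          by_cases hp1 : p = iF
          · subst hp1
            rw [emb_mul_left_fst hijF u v (-b') a' B iN, emb_mul_left_fst hijF u v (-b') a' B jN,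
              hBji, hBij, if_neg (show ¬(iF = iF ∧ jN = iN) from fun h => hijN h.2.symm),
              if_neg (show ¬(iF = jF ∧ jN = jN) from fun h => hijF h.1),
              if_neg (show ¬((iF : ℕ) = (jN : ℕ)) from fun h => hij h)]
            linear_combination (-(v*b')) * huv + v * hb'
          · by_cases hp2 : p = jF
            · subst hp2
              rw [emb_mul_left_snd hijF u v (-b') a' B iN, emb_mul_left_snd hijF u v (-b') a' B jN,
                hBji, hBij, if_neg (show ¬(jF = iF ∧ jN = iN) from fun h => hijF h.1.symm),
                if_pos (show jF = jF ∧ jN = jN from ⟨rfl, rfl⟩)]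
              linear_combination (v*b'*b') * ha' + (-(v*b'*a')) * hb'
            · rw [emb_mul_left_other hijF u v (-b') a' B hp1 hp2 iN,
                emb_mul_left_other hijF u v (-b') a' B hp1 hp2 jN,
                if_neg (show ¬(p = iF ∧ jN = iN) from fun h => hp1 h.1),
                if_neg (show ¬(p = jF ∧ jN = jN) from fun h => hp2 h.1),
                if_neg (show ¬((p : ℕ) = (jN : ℕ)) from fun h => hp2 (Fin.ext h)),
                hB p iN (fun h => hp1 (Fin.ext h)), hB p jN (fun h => hp2 (Fin.ext h))]
              ring
        · rw [mul_emb_right_other hijN 1 (-(v*b')) 1 (1 - v*b') _ p hq1 hq2,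
            if_neg (show ¬(p = iF ∧ q = iN) from fun h => hq1 h.2),
            if_neg (show ¬(p = jF ∧ q = jN) from fun h => hq2 h.2)]
          by_cases hp1 : p = iF
          · subst hp1
            rw [emb_mul_left_fst hijF u v (-b') a' B q,
              if_neg (show ¬((iF : ℕ) = (q : ℕ)) from fun h => hq1 (Fin.ext h.symm)),
              hB iF q (fun h => hq1 (Fin.ext h.symm)), hB jF q (fun h => hq2 (Fin.ext h.symm))]
            ring
          · by_cases hp2 : p = jF
            · subst hp2
              rw [emb_mul_left_snd hijF u v (-b') a' B q,
                if_neg (show ¬((jF : ℕ) = (q : ℕ)) from fun h => hq2 (Fin.ext h.symm)),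
                hB iF q (fun h => hq1 (Fin.ext h.symm)), hB jF q (fun h => hq2 (Fin.ext h.symm))]
              ring
            · rw [emb_mul_left_other hijF u v (-b') a' B hp1 hp2 q]
              by_cases hpq : (p : ℕ) = (q : ℕ)
              · rw [if_pos hpq]
              · rw [if_neg hpq, hB p q hpq]
  · intro p q hpq
    rw [hmaster]
    rw [if_neg (show ¬(p = iF ∧ q = iN) from
        fun h => hpq ((congrArg Fin.val h.1).trans (congrArg Fin.val h.2).symm)),
      if_neg (show ¬(p = jF ∧ q = jN) from
        fun h => hpq ((congrArg Fin.val h.1).trans (congrArg Fin.val h.2).symm)),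
      if_neg hpq]
  · rw [hmaster, if_pos (show iF = iF ∧ iN = iN from ⟨rfl, rfl⟩)]
    exact ⟨a', ha'⟩
  · rw [hmaster, if_pos (show iF = iF ∧ iN = iN from ⟨rfl, rfl⟩)]
    exact ⟨b', hb'⟩
  · rw [hmaster, hmaster, if_pos (show iF = iF ∧ iN = iN from ⟨rfl, rfl⟩),
      if_neg (show ¬(jF = iF ∧ jN = iN) from fun h => hijF h.1.symm),
      if_pos (show jF = jF ∧ jN = jN from ⟨rfl, rfl⟩)]
    exact ⟨a' * b', by rw [hb']; ring⟩
  · intro c h1 h2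
    rw [hmaster, hmaster, if_pos (show iF = iF ∧ iN = iN from ⟨rfl, rfl⟩),
      if_neg (show ¬(jF = iF ∧ jN = iN) from fun h => hijF h.1.symm),
      if_pos (show jF = jF ∧ jN = jN from ⟨rfl, rfl⟩)]
    constructor
    · rw [← huv]
      exact dvd_add (h1.mul_left u) (h2.mul_left v)
    · exact h2.mul_left a'
  · intro p q hpq hpi hpj
    rw [hmaster,
      if_neg (show ¬(p = iF ∧ q = iN) from fun h => hpi (congrArg Fin.val h.1)),
      if_neg (show ¬(p = jF ∧ q = jN) from fun h => hpj (congrArg Fin.val h.1)),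
      if_pos hpq]

/-- Repeatedly pivot to make the `t`-th diagonal entry divide all later diagonal
entries (up to position `s`), while keeping earlier entries untouched. -/
lemma improve {m n : ℕ} (B : Matrix (Fin m) (Fin n) R)
    (hB : ∀ (p : Fin m) (q : Fin n), (p : ℕ) ≠ (q : ℕ) → B p q = 0)
    {t : ℕ} (htm : t < m) (htn : t < n) (s : ℕ) :
    ∃ (U : Matrix (Fin m) (Fin m) R) (V : Matrix (Fin n) (Fin n) R),
      IsUnit U.det ∧ IsUnit V.det ∧
      (∀ (p : Fin m) (q : Fin n), (p : ℕ) ≠ (q : ℕ) → (U * B * V) p q = 0) ∧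
      (∀ q (hqm : q < m) (hqn : q < n), t < q → q < s →
        (U * B * V) ⟨t, htm⟩ ⟨t, htn⟩ ∣ (U * B * V) ⟨q, hqm⟩ ⟨q, hqn⟩) ∧
      (∀ p (hpm : p < m) (hpn : p < n), p < t →
        (U * B * V) ⟨p, hpm⟩ ⟨p, hpn⟩ = B ⟨p, hpm⟩ ⟨p, hpn⟩) ∧
      (∀ c : R, (∀ w (hwm : w < m) (hwn : w < n), t ≤ w → c ∣ B ⟨w, hwm⟩ ⟨w, hwn⟩) →
        ∀ q (hqm : q < m) (hqn : q < n), t ≤ q → c ∣ (U * B * V) ⟨q, hqm⟩ ⟨q, hqn⟩) := by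
  induction s with
  | zero =>
    refine ⟨1, 1, by simp, by simp, ?_, ?_, ?_, ?_⟩
    · intro p q h
      rw [Matrix.one_mul, Matrix.mul_one]
      exact hB p q h
    · intro q hqm hqn _ h
      omega
    · intro p hpm hpn _
      rw [Matrix.one_mul, Matrix.mul_one]
    · intro c hc q hqm hqn hq
      rw [Matrix.one_mul, Matrix.mul_one]
      exact hc q hqm hqn hq
  | succ s ih =>
    obtain ⟨U1, V1, hU1, hV1, hdiag1, hdvd1, hpre1, hinv1⟩ := ih
    by_cases hs : t < s ∧ s < m ∧ s < n
    · obtain ⟨hts, hsm, hsn⟩ := hs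
      obtain ⟨U2, V2, hU2, hV2, hdiag2, hgx2, hgy2, hgl2, hc2, hunch2⟩ :=
        pivot (U1 * B * V1) hdiag1 htm htn hsm hsn (Nat.ne_of_lt hts)
      have hE : (U2 * U1) * B * (V1 * V2) = U2 * (U1 * B * V1) * V2 := by
        simp only [Matrix.mul_assoc]
      refine ⟨U2 * U1, V1 * V2, by rw [Matrix.det_mul]; exact hU2.mul hU1,
        by rw [Matrix.det_mul]; exact hV1.mul hV2, ?_, ?_, ?_, ?_⟩
      · intro p q h
        rw [hE]
        exact hdiag2 p q h
      · intro q hqm hqn hq hq'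
        rw [hE]
        rcases Nat.lt_succ_iff_lt_or_eq.mp hq' with h | h
        · have hne_t : (q : ℕ) ≠ t := by omega
          have hunch := hunch2 ⟨q, hqm⟩ ⟨q, hqn⟩ rfl (by simpa using hne_t) (by simpa using Nat.ne_of_lt h)
          rw [hunch]
          exact dvd_trans hgx2 (hdvd1 q hqm hqn hq h)
        · subst h
          exact hgl2
      · intro p hpm hpn hpt
        rw [hE]
        have hunch := hunch2 ⟨p, hpm⟩ ⟨p, hpn⟩ rfl
          (by simpa using Nat.ne_of_lt hpt) (by simpa using Nat.ne_of_lt (by omega : p < s))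
        rw [hunch]
        exact hpre1 p hpm hpn hpt
      · intro c hc q hqm hqn hq
        rw [hE]
        have hCall := hinv1 c hc
        have hCt : c ∣ (U1 * B * V1) ⟨t, htm⟩ ⟨t, htn⟩ := hCall t htm htn le_rfl
        have hCs : c ∣ (U1 * B * V1) ⟨s, hsm⟩ ⟨s, hsn⟩ := hCall s hsm hsn (le_of_lt hts)
        obtain ⟨hDt, hDs⟩ := hc2 c hCt hCs
        by_cases hqt : q = t
        · subst hqt
          exact hDt
        · by_cases hqs : q = s
          · subst hqs
            exact hDs
          · have hunch := hunch2 ⟨q, hqm⟩ ⟨q, hqn⟩ rfl (by simpa using hqt) (by simpa using hqs)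
            rw [hunch]
            exact hCall q hqm hqn hq
    · refine ⟨U1, V1, hU1, hV1, hdiag1, ?_, hpre1, hinv1⟩
      intro q hqm hqn hq hq'
      rcases Nat.lt_succ_iff_lt_or_eq.mp hq' with h | h
      · exact hdvd1 q hqm hqn hq h
      · exfalso
        subst h
        exact hs ⟨hq, hqm, hqn⟩

/-- Bubble the divisibility chain into place on a diagonal matrix. -/
lemma sort {m n : ℕ} (k : ℕ) : ∀ (t : ℕ), min m n ≤ t + k →
    ∀ (B : Matrix (Fin m) (Fin n) R),
    (∀ (p : Fin m) (q : Fin n), (p : ℕ) ≠ (q : ℕ) → B p q = 0) →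
    (∀ p q (hpm : p < m) (hpn : p < n) (hqm : q < m) (hqn : q < n), p < t → p < q →
      B ⟨p, hpm⟩ ⟨p, hpn⟩ ∣ B ⟨q, hqm⟩ ⟨q, hqn⟩) →
    ∃ (U : Matrix (Fin m) (Fin m) R) (V : Matrix (Fin n) (Fin n) R),
      IsUnit U.det ∧ IsUnit V.det ∧
      (∀ (p : Fin m) (q : Fin n), (p : ℕ) ≠ (q : ℕ) → (U * B * V) p q = 0) ∧
      (∀ p q (hpm : p < m) (hpn : p < n) (hqm : q < m) (hqn : q < n), p < q →
        (U * B * V) ⟨p, hpm⟩ ⟨p, hpn⟩ ∣ (U * B * V) ⟨q, hqm⟩ ⟨q, hqn⟩) := by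
  induction k with
  | zero =>
    intro t hmin B hB hP
    refine ⟨1, 1, by simp, by simp, ?_, ?_⟩
    · intro p q h
      rw [Matrix.one_mul, Matrix.mul_one]
      exact hB p q h
    · intro p q hpm hpn hqm hqn hpq
      rw [Matrix.one_mul, Matrix.mul_one]
      exact hP p q hpm hpn hqm hqn (by omega) hpq
  | succ k ih =>
    intro t hmin B hB hP
    by_cases hts : t < m ∧ t < n
    · obtain ⟨U1, V1, hU1, hV1, hdiag1, hdvd1, hpre1, hinv1⟩ := improve B hB hts.1 hts.2 m
      have hP1 : ∀ p q (hpm : p < m) (hpn : p < n) (hqm : q < m) (hqn : q < n),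
          p < t + 1 → p < q →
          (U1 * B * V1) ⟨p, hpm⟩ ⟨p, hpn⟩ ∣ (U1 * B * V1) ⟨q, hqm⟩ ⟨q, hqn⟩ := by
        intro p q hpm hpn hqm hqn hpt hpq
        by_cases hpt' : p < t
        · rw [hpre1 p hpm hpn hpt']
          by_cases hqt : q < t
          · rw [hpre1 q hqm hqn hqt]
            exact hP p q hpm hpn hqm hqn hpt' hpq
          · exact hinv1 _ (fun w hwm hwn hw =>
              hP p w hpm hpn hwm hwn hpt' (by omega)) q hqm hqn (by omega)
        · have hpt'' : p = t := by omega
          subst hpt''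
          exact hdvd1 q hqm hqn (by omega) hqm
      obtain ⟨U2, V2, hU2, hV2, hdiag2, hsort2⟩ :=
        ih (t + 1) (by omega) (U1 * B * V1) hdiag1 hP1
      have hE : (U2 * U1) * B * (V1 * V2) = U2 * (U1 * B * V1) * V2 := by
        simp only [Matrix.mul_assoc]
      refine ⟨U2 * U1, V1 * V2, by rw [Matrix.det_mul]; exact hU2.mul hU1,
        by rw [Matrix.det_mul]; exact hV1.mul hV2, ?_, ?_⟩
      · intro p q h
        rw [hE]
        exact hdiag2 p q h
      · intro p q hpm hpn hqm hqn hpq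
        rw [hE]
        exact hsort2 p q hpm hpn hqm hqn hpq
    · refine ⟨1, 1, by simp, by simp, ?_, ?_⟩
      · intro p q h
        rw [Matrix.one_mul, Matrix.mul_one]
        exact hB p q h
      · intro p q hpm hpn hqm hqn hpq
        rw [Matrix.one_mul, Matrix.mul_one]
        exact hP p q hpm hpn hqm hqn (by omega) hpq

end SNFAux

/-- **Smith normal form over a PID.** Every `m × n` matrix over a principal ideal
domain is equivalent to a matrix in Smith normal form. -/
theorem smith_normal_form_of_isPrincipalIdealRing
    {R : Type} [CommRing R] [IsDomain R] [IsPrincipalIdealRing R]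
    {m n : ℕ} (A : Matrix (Fin m) (Fin n) R) :
    ∃ (U : Matrix (Fin m) (Fin m) R) (V : Matrix (Fin n) (Fin n) R),
      IsUnit U.det ∧ IsUnit V.det ∧
      (∀ (i : Fin m) (j : Fin n), (i : ℕ) ≠ (j : ℕ) → (U * A * V) i j = 0) ∧
      (∀ (i : ℕ) (hm : i + 1 < m) (hn : i + 1 < n),
        (U * A * V) ⟨i, by omega⟩ ⟨i, by omega⟩ ∣
          (U * A * V) ⟨i + 1, hm⟩ ⟨i + 1, hn⟩) := by
  obtain ⟨U0, V0, hU0, hV0, hdiag0⟩ := exists_diagonal A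
  obtain ⟨U1, V1, hU1, hV1, hdiag, hsort⟩ :=
    SNFAux.sort (min m n) 0 (by omega) (U0 * A * V0) hdiag0
      (fun p q hpm hpn hqm hqn h _ => absurd h (Nat.not_lt_zero p))
  have hE : (U1 * U0) * A * (V0 * V1) = U1 * (U0 * A * V0) * V1 := by
    simp only [Matrix.mul_assoc]
  refine ⟨U1 * U0, V0 * V1, by rw [Matrix.det_mul]; exact hU1.mul hU0,
    by rw [Matrix.det_mul]; exact hV0.mul hV1, ?_, ?_⟩
  · intro i j hij
    rw [hE]
    exact hdiag i j hij
  · intro i hm hn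
    rw [hE]
    exact hsort i (i + 1) (by omega) (by omega) hm hn (by omega)
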